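/- (Analytic core of Proposition 2.) Let C : ℝ → ℝ be strictly concave and differentiable at E* ∈ ℝ. Let (E_n), (I_n), (ε_n) be real sequences such that for all n: ε_n ≥ 0, I_n ≤ C(E_n), and I_n = C(E*) + C'(E*)(E_n − E*) − ε_n. If ε_n → 0 as n → ∞, then E_n → E* and I_n → C(E*). -/

import Mathlib

/-- Analytic core of Proposition 2: let `C : ℝ → ℝ` be strictly concave
and differentiable at `E*`. If for all `n`: `ε n ≥ 0`, `I n ≤ C (E n)`, and
`I n = C E* + C' E* * (E n − E*) − ε n`, and `ε n → 0`, then `E n → E*` and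
`I n → C E*`. -/
theorem operating_points_converge
    (C : ℝ → ℝ) (Estar : ℝ)
    (hconc : StrictConcaveOn ℝ Set.univ C)
    (hdiff : DifferentiableAt ℝ C Estar)
    (E I ε : ℕ → ℝ)
    (hε : ∀ n, 0 ≤ ε n)
    (hle : ∀ n, I n ≤ C (E n))
    (heq : ∀ n, I n = C Estar + deriv C Estar * (E n - Estar) - ε n)
    (hlim : Filter.Tendsto ε Filter.atTop (nhds 0)) :
    Filter.Tendsto E Filter.atTop (nhds Estar) ∧
      Filter.Tendsto I Filter.atTop (nhds (C Estar)) := by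
  set c := deriv C Estar with hc
  set g : ℝ → ℝ := fun x => C Estar + c * (x - Estar) - C x with hg
  -- g is positive away from Estar
  have hgpos : ∀ x, x ≠ Estar → 0 < g x := by
    intro x hx
    rcases lt_or_gt_of_ne hx with h | h
    · have := hconc.deriv_lt_slope (Set.mem_univ x) (Set.mem_univ Estar) h hdiff
      rw [slope_def_field] at this
      have hd : 0 < Estar - x := by linarith
      rw [lt_div_iff₀ hd, ← hc] at this
      simp only [hg]
      nlinarith
    · have := hconc.slope_lt_deriv (Set.mem_univ Estar) (Set.mem_univ x) h hdiff
      rw [slope_def_field] at this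
      have hd : 0 < x - Estar := by linarith
      rw [div_lt_iff₀ hd, ← hc] at this
      simp only [hg]
      nlinarith
  have hg0 : g Estar = 0 := by simp [hg]
  have hgnn : ∀ x, 0 ≤ g x := by
    intro x
    rcases eq_or_ne x Estar with rfl | h
    · simp [hg0]
    · exact (hgpos x h).le
  -- g is convex
  have hgconv : ConvexOn ℝ Set.univ g := by
    refine ⟨convex_univ, fun x _ y _ a b ha hb hab => ?_⟩
    rcases eq_or_lt_of_le ha with rfl | ha'
    · simp at hab; simp [hab]
    rcases eq_or_lt_of_le hb with rfl | hb'
    · simp at hab; simp [hab]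
    rcases eq_or_ne x y with rfl | hxy
    · have hx' : a • x + b • x = x := by
        simp only [smul_eq_mul]; linear_combination x * hab
      rw [hx']
      simp only [smul_eq_mul]
      have hgg : a * g x + b * g x = g x := by linear_combination (g x) * hab
      linarith
    · have hlt := hconc.2 (Set.mem_univ x) (Set.mem_univ y) hxy ha' hb' hab
      simp only [smul_eq_mul] at hlt ⊢
      simp only [hg]
      have h2 : C Estar + c * (a * x + b * y - Estar)
          - (a * (C Estar + c * (x - Estar)) + b * (C Estar + c * (y - Estar))) = 0 := by
        linear_combination (c * Estar - C Estar) * hab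
      nlinarith
  -- the key: g (E n) ≤ ε n
  have hkey : ∀ n, g (E n) ≤ ε n := by
    intro n
    have h1 := hle n
    have h2 := heq n
    simp only [hg]
    nlinarith
  have hgE : Filter.Tendsto (fun n => g (E n)) Filter.atTop (nhds 0) := by
    refine squeeze_zero (fun n => hgnn _) hkey hlim
  -- E tends to Estar
  have hEtend : Filter.Tendsto E Filter.atTop (nhds Estar) := by
    rw [Metric.tendsto_atTop]
    intro δ hδ
    set m := min (g (Estar + δ)) (g (Estar - δ)) with hm
    have hmpos : 0 < m := by
      apply lt_min
      · exact hgpos _ (by linarith)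
      · exact hgpos _ (by linarith)
    have := (Metric.tendsto_atTop.mp hgE) m hmpos
    obtain ⟨N, hN⟩ := this
    refine ⟨N, fun n hn => ?_⟩
    have hlt : g (E n) < m := by
      have := hN n hn
      rw [Real.dist_eq, sub_zero, abs_of_nonneg (hgnn _)] at this
      exact this
    rw [Real.dist_eq, abs_lt]
    by_contra hcon
    push_neg at hcon
    -- either E n ≥ Estar + δ or E n ≤ Estar - δ
    rcases le_or_gt (Estar + δ) (E n) with hge | hlt2
    · -- Estar + δ is a convex combination of Estar and E n
      rcases eq_or_lt_of_le hge with heq2 | hgt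
      · rw [← heq2] at hlt
        exact absurd hlt (not_lt.mpr (min_le_left _ _))
      · set b := δ / (E n - Estar) with hb
        have hd : 0 < E n - Estar := by linarith
        have hb0 : 0 < b := div_pos hδ hd
        have hb1 : b < 1 := (div_lt_one hd).mpr (by linarith)
        have hcomb : (1 - b) • Estar + b • E n = Estar + δ := by
          simp only [smul_eq_mul]
          field_simp [hb]
          have hbd : b * (E n - Estar) = δ := by rw [hb]; exact div_mul_cancel₀ δ hd.ne'
          linarith
        have := hgconv.2 (Set.mem_univ Estar) (Set.mem_univ (E n))
          (by linarith : (0:ℝ) ≤ 1 - b) hb0.le (by ring)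
        rw [hcomb] at this
        simp only [smul_eq_mul, hg0, mul_zero, zero_add] at this
        have : g (Estar + δ) ≤ g (E n) := by
          calc g (Estar + δ) ≤ b * g (E n) := this
            _ ≤ 1 * g (E n) := by nlinarith [hgnn (E n)]
            _ = g (E n) := one_mul _
        have := min_le_left (g (Estar + δ)) (g (Estar - δ))
        linarith
    · -- E n ≤ Estar - δ
      have hle2 : E n ≤ Estar - δ := by
        by_contra h1
        push_neg at h1
        have := hcon (by linarith)
        linarith
      rcases eq_or_lt_of_le hle2 with heq2 | hgt
      · rw [heq2] at hlt
        exact absurd hlt (not_lt.mpr (min_le_right _ _))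
      · set b := δ / (Estar - E n) with hb
        have hd : 0 < Estar - E n := by linarith
        have hb0 : 0 < b := div_pos hδ hd
        have hb1 : b < 1 := (div_lt_one hd).mpr (by linarith)
        have hcomb : (1 - b) • Estar + b • E n = Estar - δ := by
          simp only [smul_eq_mul]
          field_simp [hb]
          have hbd : b * (Estar - E n) = δ := by rw [hb]; exact div_mul_cancel₀ δ hd.ne'
          linarith
        have := hgconv.2 (Set.mem_univ Estar) (Set.mem_univ (E n))
          (by linarith : (0:ℝ) ≤ 1 - b) hb0.le (by ring)
        rw [hcomb] at this
        simp only [smul_eq_mul, hg0, mul_zero, zero_add] at this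
        have : g (Estar - δ) ≤ g (E n) := by
          calc g (Estar - δ) ≤ b * g (E n) := this
            _ ≤ 1 * g (E n) := by nlinarith [hgnn (E n)]
            _ = g (E n) := one_mul _
        have := min_le_right (g (Estar + δ)) (g (Estar - δ))
        linarith
  refine ⟨hEtend, ?_⟩
  have : Filter.Tendsto (fun n => C Estar + c * (E n - Estar) - ε n) Filter.atTop
      (nhds (C Estar + c * (Estar - Estar) - 0)) := by
    exact (Filter.Tendsto.add tendsto_const_nhds
      (Filter.Tendsto.const_mul c (hEtend.sub tendsto_const_nhds))).sub hlim
  simp only [sub_self, mul_zero, add_zero, sub_zero] at this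
  exact this.congr (fun n => (heq n).symm)
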